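/- Let M be a von Neumann algebra, T ∈ M dominated by a gauge p with constant c_p, and L a Banach limit. Then E_{L,T}(T* X T) = c_p^2 · E_{L,T}(X) for all X ∈ M, where E_{L,T}(X) is defined by ⟨E_{L,T}(X)x, y⟩ = L({⟨X T^n x, T^n y⟩/p(n)^2}_n). -/

import Mathlib

noncomputable section

/-- A complex sequence is bounded. -/
def IsBoundedSeq (u : ℕ → ℂ) : Prop := ∃ C : ℝ, ∀ n, ‖u n‖ ≤ C

/-- Almost convergence (Lorentz) of a complex sequence: the Cesàro averages
`(1/(n+1)) ∑_{i=k}^{k+n} u i` converge to `c` uniformly in `k`. -/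
def AlmostConvergentC (u : ℕ → ℂ) (c : ℂ) : Prop :=
  ∀ ε : ℝ, 0 < ε → ∃ N : ℕ, ∀ n ≥ N, ∀ k : ℕ,
    ‖(∑ i ∈ Finset.range (n + 1), u (k + i)) / ((n : ℂ) + 1) - c‖ < ε

/-- Almost convergence (Lorentz) of a real sequence. -/
def AlmostConvergentR (u : ℕ → ℝ) (c : ℝ) : Prop :=
  ∀ ε : ℝ, 0 < ε → ∃ N : ℕ, ∀ n ≥ N, ∀ k : ℕ,
    |(∑ i ∈ Finset.range (n + 1), u (k + i)) / ((n : ℝ) + 1) - c| < ε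

/-- A Banach limit: a shift-invariant positive linear functional on `ℓ^∞(ℕ, ℂ)`
with `L(1) = 1 = ‖L‖`. -/
structure BanachLimit where
  toFun : (ℕ → ℂ) → ℂ
  map_add' : ∀ u v : ℕ → ℂ, IsBoundedSeq u → IsBoundedSeq v →
    toFun (u + v) = toFun u + toFun v
  map_smul' : ∀ (a : ℂ) (u : ℕ → ℂ), IsBoundedSeq u → toFun (a • u) = a * toFun u
  norm_le' : ∀ (u : ℕ → ℂ) (C : ℝ), (∀ n, ‖u n‖ ≤ C) → ‖toFun u‖ ≤ C
  map_one' : toFun (fun _ => 1) = 1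
  shift' : ∀ u : ℕ → ℂ, IsBoundedSeq u → toFun (fun n => u (n + 1)) = toFun u
  pos' : ∀ u : ℕ → ℂ, (∀ n, ∃ r : ℝ, 0 ≤ r ∧ u n = (r : ℂ)) →
    ∃ r : ℝ, 0 ≤ r ∧ toFun u = (r : ℂ)

/-- A gauge with constant `c`: `p : ℕ → (0,∞)` with `p(n+1)/p(n)` strongly almost
convergent to `c > 0`. -/
def IsGauge (p : ℕ → ℝ) (c : ℝ) : Prop :=
  (∀ n, 0 < p n) ∧ 0 < c ∧ AlmostConvergentR (fun n => |p (n + 1) / p n - c|) 0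

variable {H : Type*} [NormedAddCommGroup H] [InnerProductSpace ℂ H] [CompleteSpace H]

/-- Positivity of a matrix of operators `[A i j]` acting on `H ⊕ ⋯ ⊕ H`. -/
def MatrixIsPos {k : ℕ} (A : Matrix (Fin k) (Fin k) (H →L[ℂ] H)) : Prop :=
  ∀ x : Fin k → H, ∃ r : ℝ, 0 ≤ r ∧
    (∑ i, ∑ j, (inner ℂ (x i) (A i j (x j)) : ℂ)) = (r : ℂ)

/-- Ultraweak (σ-weak) continuity of a functional on `B(H)`:
`l(A) = ∑ ⟨A xᵢ, yᵢ⟩` with `∑ ‖xᵢ‖² < ∞`, `∑ ‖yᵢ‖² < ∞`. -/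
def UWContinuousFunctional (l : (H →L[ℂ] H) → ℂ) : Prop :=
  ∃ x y : ℕ → H, Summable (fun i => ‖x i‖ ^ 2) ∧ Summable (fun i => ‖y i‖ ^ 2) ∧
    ∀ A : H →L[ℂ] H, HasSum (fun i => (inner ℂ (y i) (A (x i)) : ℂ)) (l A)

/-- `τ` is a faithful normal trace on the von Neumann algebra `M`. -/
def IsFiniteTrace (M : VonNeumannAlgebra H) (τ : (H →L[ℂ] H) →ₗ[ℂ] ℂ) : Prop :=
  (∀ A ∈ M, ∀ B ∈ M, τ (A * B) = τ (B * A)) ∧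
  (∀ A ∈ M, A.IsPositive → ∃ r : ℝ, 0 ≤ r ∧ τ A = (r : ℂ)) ∧
  (∀ A ∈ M, A.IsPositive → τ A = 0 → A = 0) ∧
  UWContinuousFunctional (fun A => τ A)

namespace BLaux

lemma L_zero (L : BanachLimit) : L.toFun (fun _ => 0) = 0 := by
  have h := L.map_smul' 0 (fun _ => 1) ⟨1, fun n => by simp⟩
  exact (by simpa [Pi.smul_def] using h : L.toFun 0 = 0)

lemma L_shift_iter (L : BanachLimit) (w : ℕ → ℂ) (hw : IsBoundedSeq w) (i : ℕ) :
    L.toFun (fun n => w (n + i)) = L.toFun w := by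
  induction i with
  | zero => simp
  | succ i ih =>
    obtain ⟨C, hC⟩ := hw
    have hb : IsBoundedSeq (fun n => w (n + i)) := ⟨C, fun n => hC _⟩
    have h := L.shift' (fun n => w (n + i)) hb
    rw [← ih]
    convert h using 2
    funext n
    congr 1
    omega

lemma L_sum_shifts (L : BanachLimit) (w : ℕ → ℂ) (hw : IsBoundedSeq w) (N : ℕ) :
    L.toFun (fun n => ∑ i ∈ Finset.range N, w (n + i)) = N * L.toFun w := by
  induction N with
  | zero => simpa using L_zero L
  | succ N ih =>
    obtain ⟨C, hC⟩ := hw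
    have hb1 : IsBoundedSeq (fun n => ∑ i ∈ Finset.range N, w (n + i)) := by
      refine ⟨N * C, fun n => (norm_sum_le _ _).trans ?_⟩
      calc ∑ i ∈ Finset.range N, ‖w (n + i)‖ ≤ ∑ _i ∈ Finset.range N, C :=
            Finset.sum_le_sum fun i _ => hC _
        _ = N * C := by simp [mul_comm]
    have hb2 : IsBoundedSeq (fun n => w (n + N)) := ⟨C, fun n => hC _⟩
    have key : (fun n => ∑ i ∈ Finset.range (N + 1), w (n + i)) =
        (fun n => ∑ i ∈ Finset.range N, w (n + i)) + (fun n => w (n + N)) := by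
      funext n; simp [Finset.sum_range_succ]
    rw [key, L.map_add' _ _ hb1 hb2, ih, L_shift_iter L w ⟨C, hC⟩ N]
    push_cast
    ring

lemma ac_bounded {d : ℕ → ℝ} (hd0 : ∀ n, 0 ≤ d n) (hac : AlmostConvergentR d 0) :
    ∃ M : ℝ, 0 ≤ M ∧ ∀ n, d n ≤ M := by
  obtain ⟨N, hN⟩ := hac 1 one_pos
  refine ⟨(N : ℝ) + 1, by positivity, fun k => ?_⟩
  have h := hN N le_rfl k
  have hnn : 0 ≤ ∑ i ∈ Finset.range (N + 1), d (k + i) :=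
    Finset.sum_nonneg fun i _ => hd0 _
  rw [sub_zero, abs_div, abs_of_nonneg hnn,
    abs_of_nonneg (by positivity : (0:ℝ) ≤ (N:ℝ) + 1),
    div_lt_iff₀ (by positivity)] at h
  have hle : d k ≤ ∑ i ∈ Finset.range (N + 1), d (k + i) := by
    have h0 : (0 : ℕ) ∈ Finset.range (N + 1) := by simp
    simpa using Finset.single_le_sum (f := fun i => d (k + i)) (fun i _ => hd0 _) h0
  linarith

lemma L_dominated_zero (L : BanachLimit) (w : ℕ → ℂ) (d : ℕ → ℝ)
    (hd0 : ∀ n, 0 ≤ d n) (hdom : ∀ n, ‖w n‖ ≤ d n)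
    (hac : AlmostConvergentR d 0) : L.toFun w = 0 := by
  obtain ⟨M, _, hM⟩ := ac_bounded hd0 hac
  have hwbd : IsBoundedSeq w := ⟨M, fun n => (hdom n).trans (hM n)⟩
  have key : ∀ ε : ℝ, 0 < ε → ‖L.toFun w‖ ≤ ε := by
    intro ε hε
    obtain ⟨N, hN⟩ := hac ε hε
    have hsum := L_sum_shifts L w hwbd (N + 1)
    have hb : ‖L.toFun (fun n => ∑ i ∈ Finset.range (N + 1), w (n + i))‖ ≤
        ((N : ℝ) + 1) * ε := by
      apply L.norm_le'
      intro n
      have h := hN N le_rfl n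
      have hnn : 0 ≤ ∑ i ∈ Finset.range (N + 1), d (n + i) :=
        Finset.sum_nonneg fun i _ => hd0 _
      rw [sub_zero, abs_div, abs_of_nonneg hnn,
        abs_of_nonneg (by positivity : (0:ℝ) ≤ (N:ℝ) + 1),
        div_lt_iff₀ (by positivity)] at h
      calc ‖∑ i ∈ Finset.range (N + 1), w (n + i)‖
          ≤ ∑ i ∈ Finset.range (N + 1), d (n + i) :=
            (norm_sum_le _ _).trans (Finset.sum_le_sum fun i _ => hdom _)
        _ ≤ ε * ((N : ℝ) + 1) := le_of_lt h
        _ = ((N : ℝ) + 1) * ε := by ring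
    have h2 : ((N : ℝ) + 1) * ‖L.toFun w‖ ≤ ((N : ℝ) + 1) * ε := by
      have e1 : ((N : ℝ) + 1) * ‖L.toFun w‖ =
          ‖(((N : ℕ) + 1 : ℕ) : ℂ) * L.toFun w‖ := by
        rw [norm_mul, Complex.norm_natCast]; push_cast; ring
      rw [e1, ← hsum] at *
      exact hb
    exact le_of_mul_le_mul_left h2 (by positivity)
  have h0 : ‖L.toFun w‖ ≤ 0 := le_of_forall_pos_le_add fun ε hε => by
    simpa using key ε hε
  simpa using norm_le_zero_iff.mp h0

lemma ac_smul {d : ℕ → ℝ} (hac : AlmostConvergentR d 0) {B : ℝ} (hB : 0 < B) :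
    AlmostConvergentR (fun n => B * d n) 0 := by
  intro ε hε
  obtain ⟨N, hN⟩ := hac (ε / B) (by positivity)
  refine ⟨N, fun n hn k => ?_⟩
  have h := hN n hn k
  have : (∑ i ∈ Finset.range (n + 1), B * d (k + i)) / ((n : ℝ) + 1) - 0 =
      B * ((∑ i ∈ Finset.range (n + 1), d (k + i)) / ((n : ℝ) + 1) - 0) := by
    rw [← Finset.mul_sum]; ring
  rw [this, abs_mul, abs_of_pos hB]
  calc B * |(∑ i ∈ Finset.range (n + 1), d (k + i)) / ((n : ℝ) + 1) - 0|
      < B * (ε / B) := by exact (mul_lt_mul_iff_right₀ hB).mpr h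
    _ = ε := by field_simp

end BLaux

open BLaux in
/-- `E_{L,T}(T* X T) = c_p² E_{L,T}(X)` for all `X ∈ M`. -/
theorem E_LT_star_mul
    {H : Type*} [NormedAddCommGroup H] [InnerProductSpace ℂ H] [CompleteSpace H]
    (M : VonNeumannAlgebra H) (T : H →L[ℂ] H) (hT : T ∈ M)
    (p : ℕ → ℝ) (c : ℝ) (hp : IsGauge p c)
    (hdom : ∀ n : ℕ, 1 ≤ n → ‖T ^ n‖ ≤ p n)
    (L : BanachLimit)
    (E : (H →L[ℂ] H) → (H →L[ℂ] H))
    (hE : ∀ (X : H →L[ℂ] H) (x y : H),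
      (inner ℂ y (E X x) : ℂ) =
        L.toFun (fun n => (inner ℂ ((T ^ n) y) (X ((T ^ n) x)) : ℂ) / ((p n : ℂ) ^ 2))) :
    ∀ X ∈ M, E (star T * X * T) = ((c : ℂ) ^ 2) • E X := by
  obtain ⟨hppos, hcpos, hac⟩ := hp
  intro X _
  ext x
  refine ext_inner_left ℂ fun y => ?_
  rw [hE, ContinuousLinearMap.smul_apply, inner_smul_right, hE]
  -- notation
  set a : ℕ → ℂ := fun n => (inner ℂ ((T ^ n) y) (X ((T ^ n) x)) : ℂ) with ha_def
  set g : ℕ → ℂ := fun n => a n / ((p n : ℂ) ^ 2) with hg_def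
  set v : ℕ → ℂ := fun n => g (n + 1) with hv_def
  set u : ℕ → ℂ := fun n => a (n + 1) / ((p n : ℂ) ^ 2) with hu_def
  have hpC : ∀ n, ((p n : ℂ)) ≠ 0 := fun n => by
    exact_mod_cast ne_of_gt (hppos n)
  have hnormp : ∀ n, ‖((p n : ℂ) ^ 2)‖ = p n ^ 2 := fun n => by
    rw [norm_pow, Complex.norm_real, Real.norm_eq_abs, abs_of_pos (hppos n)]
  set C : ℝ := ‖X‖ * ‖x‖ * ‖y‖ with hC_def
  have hC0 : 0 ≤ C := by positivity
  have ha_bd : ∀ m, 1 ≤ m → ‖a m‖ ≤ C * p m ^ 2 := by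
    intro m hm
    have h1 : ‖(T ^ m) x‖ ≤ p m * ‖x‖ := by
      calc ‖(T ^ m) x‖ ≤ ‖T ^ m‖ * ‖x‖ := (T ^ m).le_opNorm x
        _ ≤ p m * ‖x‖ := by
            have := hdom m hm
            exact mul_le_mul_of_nonneg_right this (norm_nonneg x)
    have h2 : ‖(T ^ m) y‖ ≤ p m * ‖y‖ := by
      calc ‖(T ^ m) y‖ ≤ ‖T ^ m‖ * ‖y‖ := (T ^ m).le_opNorm y
        _ ≤ p m * ‖y‖ := mul_le_mul_of_nonneg_right (hdom m hm) (norm_nonneg y)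
    calc ‖a m‖ ≤ ‖(T ^ m) y‖ * ‖X ((T ^ m) x)‖ := norm_inner_le_norm _ _
      _ ≤ (p m * ‖y‖) * (‖X‖ * (p m * ‖x‖)) := by
          refine mul_le_mul h2 ?_ (norm_nonneg _) (mul_nonneg (le_of_lt (hppos m)) (norm_nonneg y))
          calc ‖X ((T ^ m) x)‖ ≤ ‖X‖ * ‖(T ^ m) x‖ := X.le_opNorm _
            _ ≤ ‖X‖ * (p m * ‖x‖) := mul_le_mul_of_nonneg_left h1 (norm_nonneg X)
      _ = C * p m ^ 2 := by rw [hC_def]; ring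
  have hv_bd : ∀ n, ‖v n‖ ≤ C := by
    intro n
    have h := ha_bd (n + 1) (by omega)
    rw [hv_def]
    show ‖a (n + 1) / ((p (n + 1) : ℂ) ^ 2)‖ ≤ C
    rw [norm_div, hnormp]
    rw [div_le_iff₀ (pow_pos (hppos (n+1)) 2)]
    simpa using h
  have hvB : IsBoundedSeq v := ⟨C, hv_bd⟩
  have hg0 : ‖g 0‖ ≤ C / p 0 ^ 2 := by
    have h0 : ‖a 0‖ ≤ C := by
      calc ‖a 0‖ ≤ ‖(T ^ 0) y‖ * ‖X ((T ^ 0) x)‖ := norm_inner_le_norm _ _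
        _ ≤ ‖y‖ * (‖X‖ * ‖x‖) := by
            simp only [pow_zero, ContinuousLinearMap.one_apply]
            exact mul_le_mul_of_nonneg_left (X.le_opNorm x) (norm_nonneg y)
        _ = C := by rw [hC_def]; ring
    rw [hg_def]
    show ‖a 0 / ((p 0 : ℂ) ^ 2)‖ ≤ C / p 0 ^ 2
    rw [norm_div, hnormp]
    exact div_le_div_of_nonneg_right h0 (pow_pos (hppos 0) 2).le
  have hgB : IsBoundedSeq g := by
    refine ⟨max C (C / p 0 ^ 2), fun n => ?_⟩
    match n with
    | 0 => exact hg0.trans (le_max_right _ _)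
    | Nat.succ m =>
        have := hv_bd m
        rw [hv_def] at this
        exact this.trans (le_max_left _ _)
  -- the quotient sequence and its bound
  set q : ℕ → ℝ := fun n => p (n + 1) / p n with hq_def
  have hd0 : ∀ n, 0 ≤ |q n - c| := fun n => abs_nonneg _
  obtain ⟨K, hK0, hK⟩ := ac_bounded hd0 hac
  -- w := u - c² v
  set w : ℕ → ℂ := fun n => u n - (c : ℂ) ^ 2 * v n with hw_def
  have hw_eq : ∀ n, w n = v n * (((q n ^ 2 - c ^ 2 : ℝ)) : ℂ) := by
    intro n
    rw [hw_def, hu_def, hv_def, hg_def, hq_def]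
    show a (n+1) / (p n : ℂ)^2 - (c:ℂ)^2 * (a (n+1) / (p (n+1) : ℂ)^2)
        = a (n+1) / (p (n+1) : ℂ)^2 * (((p (n+1) / p n)^2 - c^2 : ℝ) : ℂ)
    have h1 : ((p n : ℂ)) ≠ 0 := hpC n
    have h2 : ((p (n+1) : ℂ)) ≠ 0 := hpC (n+1)
    push_cast
    field_simp
  have hw_dom : ∀ n, ‖w n‖ ≤ (C * (K + 2 * c) + 1) * |q n - c| := by
    intro n
    rw [hw_eq n, norm_mul, Complex.norm_real, Real.norm_eq_abs]
    have h1 : |q n ^ 2 - c ^ 2| ≤ (K + 2 * c) * |q n - c| := by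
      have : q n ^ 2 - c ^ 2 = (q n - c) * (q n + c) := by ring
      rw [this, abs_mul, mul_comm]
      refine mul_le_mul_of_nonneg_right ?_ (abs_nonneg _)
      calc |q n + c| = |(q n - c) + 2 * c| := by ring_nf
        _ ≤ |q n - c| + |2 * c| := abs_add_le _ _
        _ ≤ K + 2 * c := by
            have := hK n
            rw [abs_of_pos (by linarith : (0:ℝ) < 2 * c)]
            linarith
    calc ‖v n‖ * |q n ^ 2 - c ^ 2| ≤ C * ((K + 2 * c) * |q n - c|) :=
          mul_le_mul (hv_bd n) h1 (abs_nonneg _) hC0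
      _ ≤ (C * (K + 2 * c) + 1) * |q n - c| := by
          have := abs_nonneg (q n - c)
          nlinarith
  have hB' : (0:ℝ) < C * (K + 2 * c) + 1 := by nlinarith
  have hLw : L.toFun w = 0 := by
    refine L_dominated_zero L w (fun n => (C * (K + 2 * c) + 1) * |q n - c|)
      (fun n => by positivity) hw_dom ?_
    exact ac_smul hac hB'
  have hwB : IsBoundedSeq w :=
    ⟨(C * (K + 2 * c) + 1) * K, fun n => (hw_dom n).trans
      (mul_le_mul_of_nonneg_left (hK n) (le_of_lt hB'))⟩
  -- assemble
  have hu_eq : u = w + (c : ℂ) ^ 2 • v := by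
    funext n
    simp only [Pi.add_apply, Pi.smul_apply, hw_def, smul_eq_mul]
    ring
  have hc2vB : IsBoundedSeq ((c : ℂ) ^ 2 • v) := by
    refine ⟨‖(c:ℂ)^2‖ * C, fun n => ?_⟩
    simp only [Pi.smul_apply, norm_smul]
    exact mul_le_mul_of_nonneg_left (hv_bd n) (norm_nonneg _)
  have hLu : L.toFun u = (c : ℂ) ^ 2 * L.toFun v := by
    rw [hu_eq, L.map_add' _ _ hwB hc2vB, hLw, L.map_smul' _ _ hvB, zero_add]
  have hLv : L.toFun v = L.toFun g := L.shift' g hgB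
  -- identify the LHS sequence with u
  have hseq : (fun n => (inner ℂ ((T ^ n) y) ((star T * X * T) ((T ^ n) x)) : ℂ) /
      ((p n : ℂ) ^ 2)) = u := by
    funext n
    rw [hu_def]
    congr 1
    rw [ha_def]
    show (inner ℂ ((T ^ n) y) ((star T * X * T) ((T ^ n) x)) : ℂ)
        = (inner ℂ ((T ^ (n + 1)) y) (X ((T ^ (n + 1)) x)) : ℂ)
    have happ : ∀ z : H, (T ^ (n + 1)) z = T ((T ^ n) z) := by
      intro z
      rw [pow_succ']
      rfl
    rw [happ, happ]
    simp only [ContinuousLinearMap.mul_apply]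
    rw [ContinuousLinearMap.star_eq_adjoint, ContinuousLinearMap.adjoint_inner_right]
  rw [hseq, hLu, hLv]
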